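/- Define δ on the algebra T₂(ℂ) of 2×2 upper triangular complex matrices by δ([[x₁₁, x₁₂],[0, x₂₂]]) = [[x₁₁, x₁₁ − x₂₂ + x₁₂],[0, x₂₂]]. Then δ is a generalized derivation with δ(I) = I (i.e., δ(AB) = δ(A)B + Aδ(B) − Aδ(I)B for all A, B ∈ T₂(ℂ)), but δ does not satisfy the WJD property: there exist A, B ∈ T₂(ℂ) with AB = 0 and δ(AB + BA) ≠ δ(A)B + Aδ(B) + δ(B)A + Bδ(A). -/

import Mathlib

/-- The map `δ([[x₁₁,x₁₂],[0,x₂₂]]) = [[x₁₁, x₁₁ − x₂₂ + x₁₂],[0,x₂₂]]` on upper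
triangular `2 × 2` complex matrices satisfies `δ(I) = I`, is a generalized
derivation, but fails the WJD property. -/
theorem stmt_8 (δ : Matrix (Fin 2) (Fin 2) ℂ → Matrix (Fin 2) (Fin 2) ℂ)
    (hδ : ∀ M : Matrix (Fin 2) (Fin 2) ℂ,
      δ M = !![M 0 0, M 0 0 - M 1 1 + M 0 1; 0, M 1 1]) :
    δ 1 = 1 ∧
    (∀ A B : Matrix (Fin 2) (Fin 2) ℂ, A 1 0 = 0 → B 1 0 = 0 →
      δ (A * B) = δ A * B + A * δ B - A * δ 1 * B) ∧
    (∃ A B : Matrix (Fin 2) (Fin 2) ℂ, A 1 0 = 0 ∧ B 1 0 = 0 ∧ A * B = 0 ∧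
      δ (A * B + B * A) ≠ δ A * B + A * δ B + δ B * A + B * δ A) := by
  refine ⟨?_, ?_, ?_⟩
  · rw [hδ]
    ext i j
    fin_cases i <;> fin_cases j <;> simp [Matrix.one_apply]
  · intro A B hA hB
    simp only [hδ]
    ext i j
    fin_cases i <;> fin_cases j <;>
      simp [Matrix.mul_apply, Matrix.vecMul, dotProduct, Fin.sum_univ_two, hA, hB] <;> ring
  · refine ⟨!![0, 1; 0, 0], !![1, 0; 0, 0], by simp, by simp, ?_, ?_⟩
    · ext i j
      fin_cases i <;> fin_cases j <;> simp [Matrix.mul_apply, Fin.sum_univ_two]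
    · simp only [hδ]
      intro h
      have := congrFun (congrFun h 0) 1
      simp [Matrix.mul_apply, Fin.sum_univ_two] at this
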